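/- Let E be an invertible r×r complex matrix, H = E⁻¹Eᵀ, p ≥ 1, and a ∈ ℂʳ with Hᵖa = a and aᵀEHᵏa = [k ≡ 0 (mod p)] + [k ≡ 1 (mod p)]. Define L = 1 − Σ_{k=1}^{p} Hᵏ a aᵀ E H⁻ᵏ. Then for every x ∈ ℂʳ with Hx = x one has L²x = x, i.e. L restricts to an involution on the fixed space of H. -/

import Mathlib

open Matrix

lemma aux_sum_mulVec {r : Type*} [Fintype r] {ι : Type*} (s : Finset ι)
    (M : ι → Matrix r r ℂ) (v : r → ℂ) :
    (∑ k ∈ s, M k).mulVec v = ∑ k ∈ s, (M k).mulVec v := by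
  ext i
  simp only [Matrix.mulVec, dotProduct, Matrix.sum_apply, Finset.sum_apply,
    Finset.sum_mul]
  exact Finset.sum_comm

lemma aux_mulVec_sum {r : Type*} [Fintype r] {ι : Type*} (s : Finset ι)
    (M : Matrix r r ℂ) (w : ι → r → ℂ) :
    M.mulVec (∑ k ∈ s, w k) = ∑ k ∈ s, M.mulVec (w k) := by
  ext i
  simp only [Matrix.mulVec, dotProduct, Finset.sum_apply, Finset.mul_sum]
  exact Finset.sum_comm

lemma aux_dot_sum {r : Type*} [Fintype r] {ι : Type*} (s : Finset ι)
    (a : r → ℂ) (w : ι → r → ℂ) :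
    a ⬝ᵥ (∑ k ∈ s, w k) = ∑ k ∈ s, a ⬝ᵥ w k := by
  simp [dotProduct, Finset.mul_sum]
  exact Finset.sum_comm

lemma aux_vecMulVec_mulVec {r : Type*} [Fintype r] (u w v : r → ℂ) :
    (vecMulVec u w).mulVec v = (w ⬝ᵥ v) • u := by
  ext i
  simp only [Matrix.mulVec, Matrix.vecMulVec_apply, dotProduct, Pi.smul_apply,
    smul_eq_mul, Finset.sum_mul]
  exact Finset.sum_congr rfl fun j _ => by ring

lemma aux_inj {p : ℕ} (j₁ j₂ : ℕ) (h1 : j₁ ∈ Finset.Icc 1 p) (h2 : j₂ ∈ Finset.Icc 1 p)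
    (h : (j₁ : ZMod p) = j₂) : j₁ = j₂ := by
  rw [ZMod.natCast_eq_natCast_iff] at h
  have hd : (p : ℤ) ∣ (j₂ : ℤ) - j₁ := h.dvd
  simp only [Finset.mem_Icc] at h1 h2
  have := Int.eq_zero_of_abs_lt_dvd hd (by rw [abs_sub_lt_iff]; constructor <;> push_cast <;> omega)
  omega

lemma aux_sum_indicator {p : ℕ} [NeZero p] (t : ZMod p) :
    ∑ j ∈ Finset.Icc 1 p, (if ((j : ℕ) : ZMod p) = t then (1 : ℂ) else 0) = 1 := by
  classical
  have hp : 0 < p := Nat.pos_of_ne_zero (NeZero.ne p)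
  have hvlt : t.val < p := ZMod.val_lt t
  set j₀ : ℕ := if t.val = 0 then p else t.val with hj₀
  have hj₀mem : j₀ ∈ Finset.Icc 1 p := by
    rw [Finset.mem_Icc, hj₀]; split_ifs <;> omega
  have hcast : ((j₀ : ℕ) : ZMod p) = t := by
    rw [hj₀]
    split_ifs with h
    · rw [ZMod.natCast_self]
      have : ((t.val : ℕ) : ZMod p) = t := ZMod.natCast_rightInverse t
      rw [← this, h, Nat.cast_zero]
    · exact ZMod.natCast_rightInverse t
  rw [Finset.sum_eq_single_of_mem j₀ hj₀mem]
  · rw [if_pos hcast]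
  · intro j hj hne
    rw [if_neg]
    intro hc
    exact hne (aux_inj j j₀ hj hj₀mem (by rw [hc, hcast]))

/-- With the spherical-orbit data `(E, H = E⁻¹Eᵀ, a, p)`, the telescopic matrix
`L = 1 - ∑_{k=1}^{p} Hᵏ a aᵀ E H⁻ᵏ` restricts to an involution on the fixed space
of `H`: for every `x` with `Hx = x` one has `L²x = x`. -/
theorem telescopic_involution_on_flavor (r p : ℕ) (hp : 1 ≤ p)
    (E : Matrix (Fin r) (Fin r) ℂ) (hE : IsUnit E.det)
    (H : Matrix (Fin r) (Fin r) ℂ) (hH : H = E⁻¹ * Eᵀ)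
    (a : Fin r → ℂ)
    (ha : (H ^ (p : ℤ)).mulVec a = a)
    (horth : ∀ k : ℤ, a ⬝ᵥ E.mulVec ((H ^ k).mulVec a) =
      (if (k : ZMod p) = 0 then 1 else 0) + (if (k : ZMod p) = 1 then 1 else 0))
    (L : Matrix (Fin r) (Fin r) ℂ)
    (hL : L = 1 - ∑ k ∈ Finset.Icc 1 p,
      vecMulVec ((H ^ (k : ℤ)).mulVec a) (vecMul a (E * H ^ (-(k : ℤ))))) :
    ∀ x : Fin r → ℂ, H.mulVec x = x → (L * L).mulVec x = x := by
  intro x hx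
  haveI : NeZero p := ⟨by omega⟩
  have hHu : IsUnit H.det := by
    rw [hH, Matrix.det_mul, Matrix.det_transpose, Matrix.det_nonsing_inv]
    exact (isUnit_ringInverse.mpr hE).mul hE
  have hinv : H⁻¹.mulVec x = x := by
    conv_lhs => rw [← hx]
    rw [Matrix.mulVec_mulVec, Matrix.nonsing_inv_mul _ hHu, Matrix.one_mulVec]
  have hfix : ∀ k : ℤ, (H ^ k).mulVec x = x := by
    intro k
    induction k using Int.induction_on with
    | zero => simp
    | succ n ih => rw [Matrix.zpow_add_one hHu, ← Matrix.mulVec_mulVec, hx, ih]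
    | pred n ih => rw [Matrix.zpow_sub_one hHu, ← Matrix.mulVec_mulVec, hinv, ih]
  set c : ℂ := a ⬝ᵥ E.mulVec x with hc
  set s : Fin r → ℂ := ∑ k ∈ Finset.Icc 1 p, (H ^ (k : ℤ)).mulVec a with hs
  -- general action of L
  have hLv : ∀ v : Fin r → ℂ, L.mulVec v =
      v - ∑ k ∈ Finset.Icc 1 p,
        ((vecMul a (E * H ^ (-(k : ℤ))) ⬝ᵥ v) • (H ^ (k : ℤ)).mulVec a) := by
    intro v
    rw [hL, Matrix.sub_mulVec, Matrix.one_mulVec, aux_sum_mulVec]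
    congr 1
    exact Finset.sum_congr rfl fun k _ => aux_vecMulVec_mulVec _ _ _
  have hdotx : ∀ k : ℕ, vecMul a (E * H ^ (-(k : ℤ))) ⬝ᵥ x = c := by
    intro k
    rw [← Matrix.dotProduct_mulVec, ← Matrix.mulVec_mulVec, hfix]
  have hdots : ∀ k ∈ Finset.Icc 1 p, vecMul a (E * H ^ (-(k : ℤ))) ⬝ᵥ s = 2 := by
    intro k hk
    rw [← Matrix.dotProduct_mulVec, hs, aux_mulVec_sum, aux_dot_sum]
    have hterm : ∀ j ∈ Finset.Icc 1 p,
        a ⬝ᵥ (E * H ^ (-(k : ℤ))).mulVec ((H ^ (j : ℤ)).mulVec a) =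
        (if (((j : ℤ) - (k : ℤ) : ℤ) : ZMod p) = 0 then (1:ℂ) else 0) +
        (if (((j : ℤ) - (k : ℤ) : ℤ) : ZMod p) = 1 then (1:ℂ) else 0) := by
      intro j _
      rw [Matrix.mulVec_mulVec, mul_assoc, ← Matrix.zpow_add hHu]
      rw [← Matrix.mulVec_mulVec, horth]
      congr 2 <;> ring_nf
    rw [Finset.sum_congr rfl hterm, Finset.sum_add_distrib]
    have e0 : ∑ j ∈ Finset.Icc 1 p,
        (if (((j : ℤ) - (k : ℤ) : ℤ) : ZMod p) = 0 then (1:ℂ) else 0) = 1 := by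
      refine Eq.trans (Finset.sum_congr rfl fun j _ => ?_)
        (aux_sum_indicator (p := p) ((k : ℕ) : ZMod p))
      have : ((((j : ℤ) - (k : ℤ) : ℤ)) : ZMod p) = 0 ↔
          ((j : ℕ) : ZMod p) = ((k : ℕ) : ZMod p) := by
        push_cast
        rw [sub_eq_zero]
      simp only [this]
    have e1 : ∑ j ∈ Finset.Icc 1 p,
        (if (((j : ℤ) - (k : ℤ) : ℤ) : ZMod p) = 1 then (1:ℂ) else 0) = 1 := by
      refine Eq.trans (Finset.sum_congr rfl fun j _ => ?_)
        (aux_sum_indicator (p := p) (((k : ℕ) : ZMod p) + 1))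
      have : ((((j : ℤ) - (k : ℤ) : ℤ)) : ZMod p) = 1 ↔
          ((j : ℕ) : ZMod p) = ((k : ℕ) : ZMod p) + 1 := by
        push_cast
        rw [sub_eq_iff_eq_add, add_comm]
      simp only [this]
    rw [e0, e1]
    norm_num
  have hLx : L.mulVec x = x - c • s := by
    rw [hLv, hs, Finset.smul_sum]
    congr 1
    exact Finset.sum_congr rfl fun k _ => by rw [hdotx]
  have hLs : L.mulVec s = s - (2 : ℂ) • s := by
    rw [hLv, hs]
    congr 1
    rw [Finset.smul_sum]
    exact Finset.sum_congr rfl fun k hk => by rw [hdots k hk]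
  rw [← Matrix.mulVec_mulVec, hLx, Matrix.mulVec_sub, hLx, Matrix.mulVec_smul, hLs]
  have : s - (2 : ℂ) • s = -s := by
    rw [two_smul]; abel
  rw [this, smul_neg, sub_neg_eq_add, sub_add_cancel]
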